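/- Let μ(A) = γ(m(A)) be a distorted Lebesgue measure with γ strictly increasing and differentiable, γ(0)=0. If f: [0,x] → [0,∞) is nonincreasing and continuous, then (C)∫_0^x f(s) dμ(s) = ∫_0^x γ'(s) f(s) ds. -/

import Mathlib

open MeasureTheory Set Filter Topology

lemma deriv_nonneg_aux (γ : ℝ → ℝ) (hγsm : StrictMonoOn γ (Icc 0 1))
    (hγdiff : ∀ t ∈ Icc (0:ℝ) 1, DifferentiableAt ℝ γ t) :
    ∀ s ∈ Ioo (0:ℝ) 1, 0 ≤ deriv γ s := by
  intro s hs
  have hd : HasDerivAt γ (deriv γ s) s :=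
    (hγdiff s ⟨hs.1.le, hs.2.le⟩).hasDerivAt
  have hslope := hasDerivAt_iff_tendsto_slope.1 hd
  have h2 : Tendsto (slope γ s) (𝓝[>] s) (𝓝 (deriv γ s)) :=
    hslope.mono_left (nhdsWithin_mono _ (fun y hy => ne_of_gt hy))
  refine ge_of_tendsto h2 ?_
  filter_upwards [Ioo_mem_nhdsGT hs.2] with y hy
  rw [slope_def_field]
  apply div_nonneg _ (sub_nonneg.2 hy.1.le)
  exact sub_nonneg.2 <| (hγsm.monotoneOn) ⟨hs.1.le, hs.2.le⟩ ⟨hs.1.le.trans hy.1.le, hy.2.le⟩ hy.1.le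

lemma clamp_mem (x : ℝ) (hx : 0 ≤ x) : ∀ t : ℝ, max 0 (min t x) ∈ Icc 0 x :=
  fun t => ⟨le_max_left _ _, max_le hx (min_le_right _ _)⟩

lemma clamp_eq {x : ℝ} {t : ℝ} (ht : t ∈ Icc 0 x) : max 0 (min t x) = t := by
  rw [min_eq_left ht.2, max_eq_right ht.1]

lemma deriv_lintegral_le (γ : ℝ → ℝ) (hγsm : StrictMonoOn γ (Icc 0 1))
    (hγdiff : ∀ t ∈ Icc (0:ℝ) 1, DifferentiableAt ℝ γ t) (hγ0 : γ 0 = 0) :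
    ∫⁻ s in Ioc (0:ℝ) 1, ENNReal.ofReal (deriv γ s) ≤ ENNReal.ofReal (γ 1) := by
  set g : ℝ → ℝ := fun t => γ (max 0 (min t 1)) with hg
  have hγm : MonotoneOn γ (Icc 0 1) := hγsm.monotoneOn
  have hgm : Monotone g := by
    intro a b hab
    exact hγm (clamp_mem 1 zero_le_one a) (clamp_mem 1 zero_le_one b)
      (max_le_max le_rfl (min_le_min hab le_rfl))
  have hgmeas : Measurable g := hgm.measurable
  have hgeq : ∀ t ∈ Icc (0:ℝ) 1, g t = γ t := fun t ht => by rw [hg]; simp only []; rw [clamp_eq ht]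
  have hg0 : ∀ t, 0 ≤ g t := by
    intro t
    have := hγm (left_mem_Icc.2 zero_le_one) (clamp_mem 1 zero_le_one t) (le_max_left _ _)
    rwa [hγ0] at this
  have hgle : ∀ t, g t ≤ γ 1 := fun t =>
    hγm (clamp_mem 1 zero_le_one t) (right_mem_Icc.2 zero_le_one) (clamp_mem 1 zero_le_one t).2
  have hγ1 : 0 ≤ γ 1 := by have := hg0 1; rwa [hgeq 1 (right_mem_Icc.2 zero_le_one)] at this
  -- difference quotients
  set F : ℕ → ℝ → ℝ := fun n s => ((n:ℝ)+1) * (g (s + 1/((n:ℝ)+1)) - g s) with hF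
  have hn1 : ∀ n : ℕ, (0:ℝ) < (n:ℝ)+1 := fun n => by positivity
  have hFmeas : ∀ n, Measurable (F n) := by
    intro n
    exact measurable_const.mul ((hgmeas.comp (measurable_id.add_const _)).sub hgmeas)
  have hFnonneg : ∀ n s, 0 ≤ F n s := by
    intro n s
    apply mul_nonneg (hn1 n).le
    apply sub_nonneg.2
    apply hgm
    have : (0:ℝ) < 1/((n:ℝ)+1) := by positivity
    linarith
  -- integrability of g on intervals
  have hgint : ∀ a b : ℝ, IntervalIntegrable g volume a b := by
    intro a b
    apply IntervalIntegrable.mono_fun' (g := fun _ => γ 1)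
    · exact intervalIntegrable_const
    · exact hgmeas.aestronglyMeasurable
    · filter_upwards with t
      rw [Real.norm_eq_abs, abs_of_nonneg (hg0 t)]
      exact hgle t
  -- bound on each ∫⁻ F n
  have hFbound : ∀ n, ∫⁻ s in Ioc (0:ℝ) 1, ENNReal.ofReal (F n s) ≤ ENNReal.ofReal (γ 1) := by
    intro n
    set h : ℝ := 1/((n:ℝ)+1) with hh
    have hhpos : 0 < h := by positivity
    have hhle : h ≤ 1 := by rw [hh, div_le_one (hn1 n)]; simp
    have hFi : IntegrableOn (F n) (Ioc (0:ℝ) 1) volume := by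
      apply Measure.integrableOn_of_bounded (M := ((n:ℝ)+1) * γ 1) measure_Ioc_lt_top.ne
        (hFmeas n).aestronglyMeasurable
      filter_upwards with t
      rw [Real.norm_eq_abs, abs_of_nonneg (hFnonneg n t)]
      apply mul_le_mul_of_nonneg_left _ (hn1 n).le
      linarith [hgle (t+h), hg0 t]
    rw [← ofReal_integral_eq_lintegral_ofReal hFi
      (Filter.Eventually.of_forall (fun s => hFnonneg n s))]
    apply ENNReal.ofReal_le_ofReal
    have e1 : ∫ s in Ioc (0:ℝ) 1, F n s = ∫ s in (0:ℝ)..1, F n s := by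
      rw [intervalIntegral.integral_of_le zero_le_one]
    have hi1 : IntervalIntegrable (fun s => g (s + h)) volume 0 1 := by
      have := (hgint h (1+h)).comp_add_right h
      simpa using this
    have e2 : ∫ s in (0:ℝ)..1, F n s
        = ((n:ℝ)+1) * ((∫ s in (0:ℝ)..1, g (s + h)) - ∫ s in (0:ℝ)..1, g s) := by
      rw [← intervalIntegral.integral_sub hi1 (hgint 0 1), ← intervalIntegral.integral_const_mul]
    have e3 : (∫ s in (0:ℝ)..1, g (s + h)) = ∫ s in h..(1+h), g s := by
      simpa using intervalIntegral.integral_comp_add_right g h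
    have e4 : (∫ s in h..(1+h), g s) = (∫ s in h..1, g s) + ∫ s in (1:ℝ)..(1+h), g s :=
      (intervalIntegral.integral_add_adjacent_intervals (hgint h 1) (hgint 1 (1+h))).symm
    have e5 : (∫ s in (0:ℝ)..1, g s) = (∫ s in (0:ℝ)..h, g s) + ∫ s in h..1, g s :=
      (intervalIntegral.integral_add_adjacent_intervals (hgint 0 h) (hgint h 1)).symm
    have e6 : (∫ s in (1:ℝ)..(1+h), g s) ≤ h * γ 1 := by
      have := intervalIntegral.integral_mono_on (by linarith : (1:ℝ) ≤ 1+h) (hgint 1 (1+h))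
        (intervalIntegrable_const (c := γ 1)) (fun t _ => hgle t)
      simpa using this
    have e7 : (0:ℝ) ≤ ∫ s in (0:ℝ)..h, g s :=
      intervalIntegral.integral_nonneg hhpos.le (fun t _ => hg0 t)
    have e8 : ((n:ℝ)+1) * h = 1 := by rw [hh]; field_simp
    calc ∫ s in Ioc (0:ℝ) 1, F n s
        = ((n:ℝ)+1) * ((∫ s in (1:ℝ)..(1+h), g s) - ∫ s in (0:ℝ)..h, g s) := by
          rw [e1, e2, e3, e4, e5]; ring
      _ ≤ ((n:ℝ)+1) * (h * γ 1 - 0) := by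
          apply mul_le_mul_of_nonneg_left _ (hn1 n).le; linarith
      _ = γ 1 := by rw [sub_zero, ← mul_assoc, e8, one_mul]
  -- pointwise convergence
  have hpt : ∀ s ∈ Ioo (0:ℝ) 1,
      Tendsto (fun n => ENNReal.ofReal (F n s)) atTop (𝓝 (ENNReal.ofReal (deriv γ s))) := by
    intro s hs
    have hd : HasDerivAt γ (deriv γ s) s := (hγdiff s ⟨hs.1.le, hs.2.le⟩).hasDerivAt
    have hslope := hasDerivAt_iff_tendsto_slope.1 hd
    have htend : Tendsto (fun n : ℕ => 1/((n:ℝ)+1)) atTop (𝓝 0) :=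
      tendsto_one_div_add_atTop_nhds_zero_nat
    have hseq : Tendsto (fun n : ℕ => s + 1/((n:ℝ)+1)) atTop (𝓝[≠] s) := by
      apply tendsto_nhdsWithin_of_tendsto_nhds_of_eventually_within
      · simpa using tendsto_const_nhds.add htend
      · filter_upwards with n
        have : (0:ℝ) < 1/((n:ℝ)+1) := by positivity
        simp only [mem_compl_iff, mem_singleton_iff]
        intro hcon
        nlinarith [congrArg (fun z => z - s) hcon]
    have h1 : Tendsto (fun n : ℕ => slope γ s (s + 1/((n:ℝ)+1))) atTop (𝓝 (deriv γ s)) :=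
      hslope.comp hseq
    have hev : ∀ᶠ n : ℕ in atTop, 1/((n:ℝ)+1) < 1 - s :=
      htend.eventually_lt_const (by linarith [hs.2])
    have h2 : (fun n : ℕ => slope γ s (s + 1/((n:ℝ)+1))) =ᶠ[atTop] (fun n => F n s) := by
      filter_upwards [hev] with n hn
      have hpos : (0:ℝ) < 1/((n:ℝ)+1) := by positivity
      have hmem : s + 1/((n:ℝ)+1) ∈ Icc (0:ℝ) 1 := ⟨by linarith [hs.1], by linarith⟩
      have hsm : s ∈ Icc (0:ℝ) 1 := ⟨hs.1.le, hs.2.le⟩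
      rw [slope_def_field, hF]
      simp only []
      rw [hgeq _ hmem, hgeq _ hsm]
      have : s + 1/((n:ℝ)+1) - s = 1/((n:ℝ)+1) := by ring
      rw [this]
      field_simp
    have h3 : Tendsto (fun n : ℕ => F n s) atTop (𝓝 (deriv γ s)) := h1.congr' h2
    exact (ENNReal.continuous_ofReal.tendsto _).comp h3
  have hae : ∀ᵐ s ∂(volume.restrict (Ioc (0:ℝ) 1)),
      ENNReal.ofReal (deriv γ s) = liminf (fun n => ENNReal.ofReal (F n s)) atTop := by
    have hone : ∀ᵐ s : ℝ ∂volume, s ≠ 1 := by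
      rw [ae_iff]
      have h : {s : ℝ | ¬ s ≠ 1} = {1} := by ext; simp
      rw [h]; exact measure_singleton 1
    rw [ae_restrict_iff' measurableSet_Ioc]
    filter_upwards [hone] with s hs1 hs
    exact ((hpt s ⟨hs.1, lt_of_le_of_ne hs.2 hs1⟩).liminf_eq).symm
  calc ∫⁻ s in Ioc (0:ℝ) 1, ENNReal.ofReal (deriv γ s)
      = ∫⁻ s in Ioc (0:ℝ) 1, liminf (fun n => ENNReal.ofReal (F n s)) atTop :=
        lintegral_congr_ae hae
    _ ≤ liminf (fun n => ∫⁻ s in Ioc (0:ℝ) 1, ENNReal.ofReal (F n s)) atTop :=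
        lintegral_liminf_le (fun n => (hFmeas n).ennreal_ofReal)
    _ ≤ ENNReal.ofReal (γ 1) := by
        have h : ∀ᶠ n in atTop, (∫⁻ s in Ioc (0:ℝ) 1, ENNReal.ofReal (F n s))
            ≤ ENNReal.ofReal (γ 1) := Filter.Eventually.of_forall hFbound
        simpa [Filter.liminf_const] using Filter.liminf_le_liminf h

lemma deriv_integrableOn (γ : ℝ → ℝ) (hγsm : StrictMonoOn γ (Icc 0 1))
    (hγdiff : ∀ t ∈ Icc (0:ℝ) 1, DifferentiableAt ℝ γ t) (hγ0 : γ 0 = 0) :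
    IntegrableOn (deriv γ) (Ioc (0:ℝ) 1) volume := by
  constructor
  · exact (measurable_deriv γ).aestronglyMeasurable
  · rw [hasFiniteIntegral_iff_norm]
    have hcong : ∫⁻ s in Ioc (0:ℝ) 1, ENNReal.ofReal ‖deriv γ s‖
        = ∫⁻ s in Ioc (0:ℝ) 1, ENNReal.ofReal (deriv γ s) := by
      apply lintegral_congr_ae
      rw [Filter.EventuallyEq]
      have hone : ∀ᵐ s : ℝ ∂volume, s ≠ 1 := by
        rw [ae_iff]
        have h : {s : ℝ | ¬ s ≠ 1} = {1} := by ext; simp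
        rw [h]; exact measure_singleton 1
      rw [ae_restrict_iff' measurableSet_Ioc]
      filter_upwards [hone] with s hs1 hs
      rw [Real.norm_eq_abs, abs_of_nonneg
        (deriv_nonneg_aux γ hγsm hγdiff s ⟨hs.1, lt_of_le_of_ne hs.2 hs1⟩)]
    rw [hcong]
    exact lt_of_le_of_lt (deriv_lintegral_le γ hγsm hγdiff hγ0) ENNReal.ofReal_lt_top

lemma ftc_aux (γ : ℝ → ℝ) (hγsm : StrictMonoOn γ (Icc 0 1))
    (hγdiff : ∀ t ∈ Icc (0:ℝ) 1, DifferentiableAt ℝ γ t) (hγ0 : γ 0 = 0)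
    {t : ℝ} (ht : t ∈ Icc (0:ℝ) 1) :
    ∫ s in Ioc (0:ℝ) t, deriv γ s = γ t := by
  have hii : IntervalIntegrable (deriv γ) volume 0 t := by
    rw [intervalIntegrable_iff_integrableOn_Ioc_of_le ht.1]
    exact (deriv_integrableOn γ hγsm hγdiff hγ0).mono_set (Ioc_subset_Ioc le_rfl ht.2)
  have hftc := intervalIntegral.integral_eq_sub_of_hasDerivAt (f := γ) (f' := deriv γ)
    (a := 0) (b := t) ?_ hii
  · rw [← intervalIntegral.integral_of_le ht.1, hftc, hγ0, sub_zero]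
  · intro s hs
    rw [uIcc_of_le ht.1] at hs
    exact (hγdiff s ⟨hs.1, hs.2.trans ht.2⟩).hasDerivAt


/-- The Choquet integral of `f` over `A` with respect to the set function `μ`:
`∫_0^∞ μ({f ≥ β} ∩ A) dβ + ∫_{-∞}^0 (μ({f ≥ β} ∩ A) - μ A) dβ`. -/
noncomputable def choquet {α : Type*} (μ : Set α → ℝ) (A : Set α) (f : α → ℝ) : ℝ :=
  (∫ β in Ioi (0:ℝ), μ ({ω | β ≤ f ω} ∩ A)) +
  ∫ β in Iio (0:ℝ), (μ ({ω | β ≤ f ω} ∩ A) - μ A)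

/-- For a distorted Lebesgue measure `μ(A) = γ(m(A))` with `γ` strictly increasing,
differentiable and `γ(0)=0`, and `f ≥ 0` nonincreasing and continuous on `[0,x]`,
`(C)∫_0^x f dμ = ∫_0^x γ'(s) f(s) ds`. -/
theorem choquet_nonincreasing_formula (γ : ℝ → ℝ)
    (hγsm : StrictMonoOn γ (Icc 0 1))
    (hγdiff : ∀ t ∈ Icc (0:ℝ) 1, DifferentiableAt ℝ γ t)
    (hγ0 : γ 0 = 0)
    (x : ℝ) (hx : x ∈ Icc (0:ℝ) 1)
    (f : ℝ → ℝ) (hfpos : ∀ s, 0 ≤ f s)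
    (hfanti : AntitoneOn f (Icc 0 x)) (hfcont : ContinuousOn f (Icc 0 x)) :
    choquet (fun A => γ (volume A).toReal) (Icc 0 x) f
      = ∫ s in (0:ℝ)..x, deriv γ s * f s := by
  obtain ⟨hx0, hx1⟩ := hx
  have hγm : MonotoneOn γ (Icc 0 1) := hγsm.monotoneOn
  have hone : ∀ᵐ s : ℝ ∂volume, s ≠ 1 := by
    rw [ae_iff]
    have h : {s : ℝ | ¬ s ≠ 1} = {1} := by ext; simp
    rw [h]; exact measure_singleton 1
  -- the negative part vanishes
  have hneg : (∫ β in Iio (0:ℝ), (γ (volume ({ω | β ≤ f ω} ∩ Icc 0 x)).toReal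
      - γ (volume (Icc (0:ℝ) x)).toReal)) = 0 := by
    have hz : EqOn (fun β : ℝ => γ (volume ({ω | β ≤ f ω} ∩ Icc 0 x)).toReal
        - γ (volume (Icc (0:ℝ) x)).toReal) (fun _ => (0:ℝ)) (Iio 0) := by
      intro β hβ
      have hset : {ω : ℝ | β ≤ f ω} ∩ Icc 0 x = Icc 0 x := by
        apply inter_eq_self_of_subset_right
        intro ω _
        exact le_trans (le_of_lt hβ) (hfpos ω)
      simp [hset]
    rw [setIntegral_congr_fun measurableSet_Iio hz, integral_zero]
  simp only [choquet]
  rw [hneg, add_zero]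
  -- clamped f
  set ft : ℝ → ℝ := fun s => f (max 0 (min s x)) with hftdef
  have hftc : Continuous ft := by
    apply hfcont.comp_continuous
      (continuous_const.max (continuous_id.min continuous_const)) (clamp_mem x hx0)
  have hfteq : ∀ s ∈ Icc (0:ℝ) x, ft s = f s := fun s hs => by
    rw [hftdef]; simp only []; rw [clamp_eq hs]
  -- the distribution function
  set g : ℝ → ℝ := fun β => (volume ({ω : ℝ | β ≤ f ω} ∩ Icc 0 x)).toReal with hgdef
  have hvol_ne : ∀ β, volume ({ω : ℝ | β ≤ f ω} ∩ Icc 0 x) ≠ ⊤ :=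
    fun β => ((measure_mono inter_subset_right).trans_lt measure_Icc_lt_top).ne
  have hgx : ∀ β, g β ∈ Icc 0 x := by
    intro β
    constructor
    · exact ENNReal.toReal_nonneg
    · apply ENNReal.toReal_le_of_le_ofReal hx0
      calc volume ({ω : ℝ | β ≤ f ω} ∩ Icc 0 x) ≤ volume (Icc (0:ℝ) x) :=
            measure_mono inter_subset_right
        _ = ENNReal.ofReal x := by rw [Real.volume_Icc, sub_zero]
  -- the sublevel structure
  have hIoc : ∀ β ∈ Ioi (0:ℝ), Ioc 0 (g β) = {s : ℝ | 0 < s ∧ s ≤ x ∧ β ≤ ft s} := by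
    intro β hβ
    rcases le_or_gt β (f 0) with hb | hb
    · set S := {ω : ℝ | β ≤ f ω} ∩ Icc 0 x with hSdef
      have hSeq : S = {ω | β ≤ ft ω} ∩ Icc 0 x := by
        ext ω
        simp only [hSdef, mem_inter_iff, mem_setOf_eq, and_congr_left_iff]
        intro hω
        rw [hfteq ω hω]
      have hSc : IsClosed S := by
        rw [hSeq]
        exact ((isClosed_le continuous_const hftc).preimage continuous_id).inter isClosed_Icc
      have hS0 : (0:ℝ) ∈ S := ⟨hb, left_mem_Icc.2 hx0⟩
      have hScomp : IsCompact S := isCompact_Icc.of_isClosed_subset hSc inter_subset_right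
      have htS : sSup S ∈ S := hScomp.sSup_mem ⟨0, hS0⟩
      have hbdd : BddAbove S := hScomp.bddAbove
      have hSicc : S = Icc 0 (sSup S) := by
        ext s
        constructor
        · intro hs; exact ⟨hs.2.1, le_csSup hbdd hs⟩
        · intro hs
          have hsx : s ∈ Icc 0 x := ⟨hs.1, hs.2.trans htS.2.2⟩
          exact ⟨le_trans htS.1 (hfanti hsx htS.2 hs.2), hsx⟩
      have hv : volume S = ENNReal.ofReal (sSup S) := by
        conv_lhs => rw [hSicc]
        rw [Real.volume_Icc, sub_zero]
      have hgval : g β = sSup S := by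
        show (volume ({ω : ℝ | β ≤ f ω} ∩ Icc 0 x)).toReal = sSup S
        rw [← hSdef, hv, ENNReal.toReal_ofReal htS.2.1]
      rw [hgval]
      ext s
      simp only [mem_Ioc, mem_setOf_eq]
      constructor
      · intro hs
        have hsS : s ∈ S := by rw [hSicc]; exact ⟨hs.1.le, hs.2⟩
        refine ⟨hs.1, hsS.2.2, ?_⟩
        rw [hfteq s hsS.2]
        exact hsS.1
      · intro hs
        have hsS : s ∈ S := by
          refine ⟨?_, ⟨hs.1.le, hs.2.1⟩⟩
          show β ≤ f s
          rw [← hfteq s ⟨hs.1.le, hs.2.1⟩]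
          exact hs.2.2
        rw [hSicc] at hsS
        exact ⟨hs.1, hsS.2⟩
    · have hSempty : {ω : ℝ | β ≤ f ω} ∩ Icc 0 x = ∅ := by
        ext ω
        simp only [mem_inter_iff, mem_setOf_eq, mem_empty_iff_false, iff_false, not_and]
        intro h1 h2
        have : f ω ≤ f 0 := hfanti (left_mem_Icc.2 hx0) h2 h2.1
        linarith
      have hg0 : g β = 0 := by rw [hgdef]; simp only []; rw [hSempty]; simp
      rw [hg0]
      ext s
      simp only [mem_Ioc, mem_setOf_eq]
      constructor
      · rintro ⟨h1, h2⟩; linarith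
      · rintro ⟨h1, h2, h3⟩
        exfalso
        have hmem : max 0 (min s x) ∈ Icc 0 x := clamp_mem x hx0 s
        have : ft s ≤ f 0 := hfanti (left_mem_Icc.2 hx0) hmem hmem.1
        linarith
  -- the product region
  set T : Set (ℝ × ℝ) := {p : ℝ × ℝ | 0 < p.2 ∧ p.2 ≤ x ∧ p.1 ≤ ft p.2} with hTdef
  have hTmeas : MeasurableSet T := by
    have h1 : MeasurableSet {p : ℝ × ℝ | 0 < p.2} :=
      measurableSet_lt measurable_const measurable_snd
    have h2 : MeasurableSet {p : ℝ × ℝ | p.2 ≤ x} :=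
      measurableSet_le measurable_snd measurable_const
    have h3 : MeasurableSet {p : ℝ × ℝ | p.1 ≤ ft p.2} :=
      measurableSet_le measurable_fst (hftc.measurable.comp measurable_snd)
    exact h1.inter (h2.inter h3)
  -- key pointwise identity
  have hkey : ∀ β ∈ Ioi (0:ℝ), ENNReal.ofReal (γ (g β))
      = ∫⁻ s, T.indicator (fun q => ENNReal.ofReal (deriv γ q.2)) (β, s) := by
    intro β hβ
    have hgb1 : g β ∈ Icc (0:ℝ) 1 := ⟨(hgx β).1, (hgx β).2.trans hx1⟩
    have hint : IntegrableOn (deriv γ) (Ioc (0:ℝ) (g β)) volume :=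
      (deriv_integrableOn γ hγsm hγdiff hγ0).mono_set (Ioc_subset_Ioc le_rfl hgb1.2)
    have hnn : 0 ≤ᵐ[volume.restrict (Ioc (0:ℝ) (g β))] deriv γ := by
      refine (ae_restrict_iff' measurableSet_Ioc).2 ?_
      filter_upwards [hone] with s hs1 hs
      exact deriv_nonneg_aux γ hγsm hγdiff s ⟨hs.1, lt_of_le_of_ne (hs.2.trans hgb1.2) hs1⟩
    rw [← ftc_aux γ hγsm hγdiff hγ0 hgb1, ofReal_integral_eq_lintegral_ofReal hint hnn,
      ← lintegral_indicator measurableSet_Ioc]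
    congr 1
    funext s
    rw [hIoc β hβ]
    simp only [Set.indicator_apply, mem_setOf_eq, hTdef]
  -- swap the integrals
  have hswap_meas :
      Measurable (fun p : ℝ × ℝ => T.indicator (fun q => ENNReal.ofReal (deriv γ q.2)) p) :=
    (((measurable_deriv γ).comp measurable_snd).ennreal_ofReal).indicator hTmeas
  have hL : (∫⁻ β in Ioi (0:ℝ), ENNReal.ofReal (γ (g β)))
      = ∫⁻ s in Ioc (0:ℝ) x, ENNReal.ofReal (deriv γ s) * ENNReal.ofReal (ft s) := by
    calc (∫⁻ β in Ioi (0:ℝ), ENNReal.ofReal (γ (g β)))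
        = ∫⁻ β in Ioi (0:ℝ), ∫⁻ s, T.indicator (fun q => ENNReal.ofReal (deriv γ q.2)) (β, s) :=
          setLIntegral_congr_fun measurableSet_Ioi (fun β hβ => hkey β hβ)
      _ = ∫⁻ s, ∫⁻ β in Ioi (0:ℝ), T.indicator (fun q => ENNReal.ofReal (deriv γ q.2)) (β, s) :=
          lintegral_lintegral_swap hswap_meas.aemeasurable
      _ = ∫⁻ s, (Ioc (0:ℝ) x).indicator
            (fun s => ENNReal.ofReal (deriv γ s) * ENNReal.ofReal (ft s)) s := by
          congr 1
          funext s
          by_cases hs : s ∈ Ioc (0:ℝ) x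
          · have hind : ∀ β : ℝ, T.indicator (fun q => ENNReal.ofReal (deriv γ q.2)) (β, s)
                = (Iic (ft s)).indicator (fun _ => ENNReal.ofReal (deriv γ s)) β := by
              intro β
              by_cases hβ : β ≤ ft s <;>
                simp [Set.indicator_apply, hTdef, hs.1, hs.2, hβ]
            rw [lintegral_congr hind, lintegral_indicator_const measurableSet_Iic,
              Measure.restrict_apply measurableSet_Iic, inter_comm, Ioi_inter_Iic,
              Real.volume_Ioc, sub_zero, Set.indicator_of_mem hs]
          · have hind0 : ∀ β : ℝ, T.indicator (fun q => ENNReal.ofReal (deriv γ q.2)) (β, s) = 0 := by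
              intro β
              apply Set.indicator_of_notMem
              rw [hTdef]
              simp only [mem_setOf_eq, not_and]
              intro h1 h2
              exact absurd ⟨h1, h2⟩ hs
            rw [lintegral_congr hind0, lintegral_zero, Set.indicator_of_notMem hs]
      _ = ∫⁻ s in Ioc (0:ℝ) x, ENNReal.ofReal (deriv γ s) * ENNReal.ofReal (ft s) :=
          lintegral_indicator measurableSet_Ioc _
  -- rewrite both sides via lintegrals
  have hγg_nn : ∀ β : ℝ, 0 ≤ γ (g β) := by
    intro β
    have := hγm (left_mem_Icc.2 zero_le_one) ⟨(hgx β).1, (hgx β).2.trans hx1⟩ (hgx β).1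
    rwa [hγ0] at this
  have hganti : Antitone (fun β => γ (g β)) := by
    intro b1 b2 h12
    apply hγm ⟨(hgx b2).1, (hgx b2).2.trans hx1⟩ ⟨(hgx b1).1, (hgx b1).2.trans hx1⟩
    apply ENNReal.toReal_mono (hvol_ne b1)
    apply measure_mono
    apply inter_subset_inter_left
    intro ω hω
    exact le_trans h12 hω
  have hLHS : (∫ β in Ioi (0:ℝ), γ (volume ({ω | β ≤ f ω} ∩ Icc 0 x)).toReal)
      = (∫⁻ β in Ioi (0:ℝ), ENNReal.ofReal (γ (g β))).toReal :=
    integral_eq_lintegral_of_nonneg_ae (ae_of_all _ hγg_nn)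
      hganti.measurable.aestronglyMeasurable.restrict
  have hRHS : (∫ s in (0:ℝ)..x, deriv γ s * f s)
      = (∫⁻ s in Ioc (0:ℝ) x, ENNReal.ofReal (deriv γ s) * ENNReal.ofReal (ft s)).toReal := by
    rw [intervalIntegral.integral_of_le hx0]
    have he : EqOn (fun s => deriv γ s * f s) (fun s => deriv γ s * ft s) (Ioc 0 x) := by
      intro s hs
      simp only []
      rw [hfteq s ⟨hs.1.le, hs.2⟩]
    rw [setIntegral_congr_fun measurableSet_Ioc he]
    have hnn2 : 0 ≤ᵐ[volume.restrict (Ioc (0:ℝ) x)] fun s => deriv γ s * ft s := by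
      refine (ae_restrict_iff' measurableSet_Ioc).2 ?_
      filter_upwards [hone] with s hs1 hs
      exact mul_nonneg (deriv_nonneg_aux γ hγsm hγdiff s
        ⟨hs.1, lt_of_le_of_ne (hs.2.trans hx1) hs1⟩) (hfpos _)
    rw [integral_eq_lintegral_of_nonneg_ae hnn2
      ((measurable_deriv γ).mul hftc.measurable).aestronglyMeasurable.restrict]
    congr 1
    apply lintegral_congr_ae
    rw [Filter.EventuallyEq, ae_restrict_iff' measurableSet_Ioc]
    filter_upwards [hone] with s hs1 hs
    rw [ENNReal.ofReal_mul (deriv_nonneg_aux γ hγsm hγdiff s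
      ⟨hs.1, lt_of_le_of_ne (hs.2.trans hx1) hs1⟩)]
  rw [hLHS, hRHS, hL]
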